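/- arXiv:2604.03966 — 3 statements merged into one kernel-verified Lean document; each statement's English description precedes it below -/
import Mathlib

section
/- Let p < q be primes and n = pq. Then the independence polynomial of the comaximal graph Γ(ℤ_n) is I(Γ(ℤ_n), x) = (φ(n) − 1)·x + (1 + x)^p + (1 + x)^q − 1. -/
open Polynomial

/-- The comaximal graph of `ℤ/nℤ`: distinct `a, b` are adjacent iff the ideal
generated by `a` and `b` is the whole ring. -/
def comaximalGraph (n : ℕ) : SimpleGraph (ZMod n) where
  Adj a b := a ≠ b ∧ Ideal.span ({a, b} : Set (ZMod n)) = ⊤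
  symm := by
    constructor
    rintro a b ⟨hab, h⟩
    refine ⟨hab.symm, ?_⟩
    rwa [Set.pair_comm]
  loopless := by
    constructor
    rintro a ⟨h, -⟩
    exact h rfl

/-- `S` is an independent dominating set of `G`. -/
def IsIndepDomSet {V : Type*} (G : SimpleGraph V) (S : Finset V) : Prop :=
  (∀ a ∈ S, ∀ b ∈ S, ¬ G.Adj a b) ∧ ∀ v : V, v ∉ S → ∃ u ∈ S, G.Adj u v

/-- The independent domination polynomial `D_i(G, x) = Σ_k d_i(G,k) x^k`. -/
noncomputable def indepDomPoly {V : Type*} (G : SimpleGraph V) : Polynomial ℝ :=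
  ∑ k ∈ Finset.range (Nat.card V + 1),
    Polynomial.C ((Nat.card {S : Finset V // IsIndepDomSet G S ∧ S.card = k}) : ℝ) *
      Polynomial.X ^ k

/-- The independence polynomial `I(G, x) = Σ_k c_k x^k`. -/
noncomputable def indepPoly {V : Type*} (G : SimpleGraph V) : Polynomial ℝ :=
  ∑ k ∈ Finset.range (Nat.card V + 1),
    Polynomial.C ((Nat.card {S : Finset V //
        (∀ a ∈ S, ∀ b ∈ S, ¬ G.Adj a b) ∧ S.card = k}) : ℝ) *
      Polynomial.X ^ k

section Aux

lemma sum_powerset_X {V : Type*} (T : Finset V) :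
    ∑ S ∈ T.powerset, (X : ℝ[X]) ^ S.card = (1 + X) ^ T.card := by
  rw [Finset.sum_powerset,
    show ((1 : ℝ[X]) + X) ^ T.card = (X + 1) ^ T.card by rw [add_comm], add_pow]
  refine Finset.sum_congr rfl fun j hj => ?_
  rw [Finset.sum_powersetCard]
  simp [nsmul_eq_mul, mul_comm]

lemma indepPoly_eq_sum {V : Type*} [Fintype V] (G : SimpleGraph V)
    (I : Finset (Finset V))
    (hI : ∀ S, S ∈ I ↔ ∀ a ∈ S, ∀ b ∈ S, ¬ G.Adj a b) :
    indepPoly G = ∑ S ∈ I, (X : ℝ[X]) ^ S.card := by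
  classical
  unfold indepPoly
  rw [← Finset.sum_fiberwise_of_maps_to (g := Finset.card)
      (t := Finset.range (Nat.card V + 1))
      (fun S _ => by
        simp only [Finset.mem_range, Nat.card_eq_fintype_card]
        exact Nat.lt_succ_of_le (Finset.card_le_univ S))
      (fun S => (X : ℝ[X]) ^ S.card)]
  refine Finset.sum_congr rfl fun k _ => ?_
  have h1 : ∀ S ∈ I.filter (fun S => S.card = k), (X : ℝ[X]) ^ S.card = X ^ k := by
    intro S hS
    rw [(Finset.mem_filter.1 hS).2]
  rw [Finset.sum_congr rfl h1, Finset.sum_const, Nat.card_eq_fintype_card,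
    Fintype.card_subtype]
  have h2 : Finset.univ.filter
      (fun S : Finset V => (∀ a ∈ S, ∀ b ∈ S, ¬ G.Adj a b) ∧ S.card = k)
      = I.filter (fun S => S.card = k) := by
    ext S
    simp [hI S, and_comm]
  rw [h2]
  simp [nsmul_eq_mul]

end Aux

/-- For `n = pq` with primes `p < q`,
`I(Γ(ℤ_n), x) = (φ(n) − 1)·x + (1 + x)^p + (1 + x)^q − 1`. -/
theorem stmt_15 (p q : ℕ) (hp : p.Prime) (hq : q.Prime) (hpq : p < q) :
    indepPoly (comaximalGraph (p * q)) =
      Polynomial.C ((Nat.totient (p * q) - 1 : ℕ) : ℝ) * Polynomial.X +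
        (1 + Polynomial.X) ^ p + (1 + Polynomial.X) ^ q - 1 := by
  haveI : Fact p.Prime := ⟨hp⟩
  haveI : Fact q.Prime := ⟨hq⟩
  have hcop : p.Coprime q := (Nat.coprime_primes hp hq).2 hpq.ne
  have hn : 0 < p * q := Nat.mul_pos hp.pos hq.pos
  haveI : NeZero (p * q) := ⟨hn.ne'⟩
  set e := ZMod.chineseRemainder hcop with he
  -- span characterization
  have span_iff : ∀ a b : ZMod (p * q), Ideal.span ({a, b} : Set (ZMod (p*q))) = ⊤ ↔
      (((e a).1 ≠ 0 ∨ (e b).1 ≠ 0) ∧ ((e a).2 ≠ 0 ∨ (e b).2 ≠ 0)) := by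
    intro a b
    constructor
    · intro h1
      have h2 : (1 : ZMod (p*q)) ∈ Ideal.span ({a, b} : Set (ZMod (p*q))) := by
        rw [h1]; exact Submodule.mem_top
      obtain ⟨u, v, huv⟩ := Ideal.mem_span_pair.1 h2
      constructor
      · by_contra hc
        push_neg at hc
        have := congrArg (fun z => (e z).1) huv
        simp only [map_add, map_mul, map_one, Prod.fst_add, Prod.fst_mul, Prod.fst_one,
          hc.1, hc.2, mul_zero, add_zero] at this
        exact zero_ne_one this
      · by_contra hc
        push_neg at hc
        have := congrArg (fun z => (e z).2) huv
        simp only [map_add, map_mul, map_one, Prod.snd_add, Prod.snd_mul, Prod.snd_one,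
          hc.1, hc.2, mul_zero, add_zero] at this
        exact zero_ne_one this
    · rintro ⟨h1, h2⟩
      have e1 : ∃ u1 v1 : ZMod p, u1 * (e a).1 + v1 * (e b).1 = 1 := by
        rcases h1 with ha | hb
        · exact ⟨((e a).1)⁻¹, 0, by simp [inv_mul_cancel₀ ha]⟩
        · exact ⟨0, ((e b).1)⁻¹, by simp [inv_mul_cancel₀ hb]⟩
      have e2 : ∃ u2 v2 : ZMod q, u2 * (e a).2 + v2 * (e b).2 = 1 := by
        rcases h2 with ha | hb
        · exact ⟨((e a).2)⁻¹, 0, by simp [inv_mul_cancel₀ ha]⟩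
        · exact ⟨0, ((e b).2)⁻¹, by simp [inv_mul_cancel₀ hb]⟩
      obtain ⟨u1, v1, h1'⟩ := e1
      obtain ⟨u2, v2, h2'⟩ := e2
      rw [Ideal.eq_top_iff_one]
      refine Ideal.mem_span_pair.2 ⟨e.symm (u1, u2), e.symm (v1, v2), ?_⟩
      apply e.injective
      rw [map_add, map_mul, map_mul, map_one, RingEquiv.apply_symm_apply,
        RingEquiv.apply_symm_apply]
      refine Prod.ext ?_ ?_
      · simpa using h1'
      · simpa using h2'
  -- the families
  set Z1 : Finset (ZMod (p*q)) := Finset.univ.filter (fun x => (e x).1 = 0) with hZ1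
  set Z2 : Finset (ZMod (p*q)) := Finset.univ.filter (fun x => (e x).2 = 0) with hZ2
  set Fu : Finset (ZMod (p*q)) :=
    Finset.univ.filter (fun x => (e x).1 ≠ 0 ∧ (e x).2 ≠ 0) with hFu
  set I : Finset (Finset (ZMod (p*q))) :=
    (Z1.powerset ∪ Z2.powerset) ∪ Fu.image (fun u => {u}) with hIdef
  have memZ1 : ∀ x, x ∈ Z1 ↔ (e x).1 = 0 := by intro x; simp [hZ1]
  have memZ2 : ∀ x, x ∈ Z2 ↔ (e x).2 = 0 := by intro x; simp [hZ2]
  have hI : ∀ S, S ∈ I ↔ ∀ a ∈ S, ∀ b ∈ S, ¬ (comaximalGraph (p*q)).Adj a b := by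
    intro S
    constructor
    · intro hS a ha b hb hadj
      obtain ⟨hne, hsp⟩ := hadj
      have hcond := (span_iff a b).1 hsp
      simp only [hIdef, Finset.mem_union, Finset.mem_powerset, Finset.mem_image] at hS
      rcases hS with (h | h) | ⟨u, hu, hSu⟩
      · rcases hcond.1 with h' | h'
        · exact h' ((memZ1 a).1 (h ha))
        · exact h' ((memZ1 b).1 (h hb))
      · rcases hcond.2 with h' | h'
        · exact h' ((memZ2 a).1 (h ha))
        · exact h' ((memZ2 b).1 (h hb))
      · subst hSu
        rw [Finset.mem_singleton] at ha hb
        exact hne (ha.trans hb.symm)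
    · intro hind
      by_cases hu : ∃ u ∈ S, (e u).1 ≠ 0 ∧ (e u).2 ≠ 0
      · obtain ⟨u, huS, hcond⟩ := hu
        have hSu : S = {u} := by
          ext x
          rw [Finset.mem_singleton]
          constructor
          · intro hxS
            by_contra hx
            exact hind u huS x hxS ⟨fun h => hx h.symm,
              (span_iff u x).2 ⟨Or.inl hcond.1, Or.inl hcond.2⟩⟩
          · rintro rfl; exact huS
        refine Finset.mem_union_right _ (Finset.mem_image.2 ⟨u, ?_, hSu.symm⟩)
        simp [hFu, hcond]
      · push_neg at hu
        have hsub : S ⊆ Z1 ∨ S ⊆ Z2 := by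
          by_contra hc
          push_neg at hc
          obtain ⟨a, haS, haZ⟩ := Finset.not_subset.1 hc.1
          obtain ⟨b, hbS, hbZ⟩ := Finset.not_subset.1 hc.2
          rw [memZ1] at haZ
          rw [memZ2] at hbZ
          have ha2 : (e a).2 = 0 := hu a haS haZ
          have hb1 : (e b).1 = 0 := by
            by_contra hb1
            exact hbZ (hu b hbS hb1)
          have hab : a ≠ b := fun h => haZ (h ▸ hb1)
          exact hind a haS b hbS ⟨hab, (span_iff a b).2 ⟨Or.inl haZ, Or.inr hbZ⟩⟩
        rcases hsub with h | h
        · exact Finset.mem_union_left _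
            (Finset.mem_union_left _ (Finset.mem_powerset.2 h))
        · exact Finset.mem_union_left _
            (Finset.mem_union_right _ (Finset.mem_powerset.2 h))
  rw [indepPoly_eq_sum _ I hI]
  -- disjointness
  have hdisj : Disjoint (Z1.powerset ∪ Z2.powerset) (Fu.image (fun u => {u})) := by
    rw [Finset.disjoint_left]
    rintro S hS hS'
    obtain ⟨u, hu, rfl⟩ := Finset.mem_image.1 hS'
    simp only [hFu, Finset.mem_filter] at hu
    rcases Finset.mem_union.1 hS with h | h
    · exact hu.2.1 ((memZ1 u).1 (Finset.mem_powerset.1 h (Finset.mem_singleton_self u)))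
    · exact hu.2.2 ((memZ2 u).1 (Finset.mem_powerset.1 h (Finset.mem_singleton_self u)))
  rw [hIdef, Finset.sum_union hdisj]
  -- cardinalities
  have cardZ1 : Z1.card = q := by
    have key : Z1.card = (Finset.univ : Finset (ZMod q)).card := by
      refine Finset.card_bij (fun x _ => (e x).2) (fun x _ => Finset.mem_univ _)
        (fun x hx y hy hxy => e.injective (Prod.ext
          (((memZ1 x).1 hx).trans ((memZ1 y).1 hy).symm) hxy)) (fun c _ => ?_)
      exact ⟨e.symm (0, c), (memZ1 _).2 (by simp), by simp⟩
    rw [key, Finset.card_univ, ZMod.card]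
  have cardZ2 : Z2.card = p := by
    have key : Z2.card = (Finset.univ : Finset (ZMod p)).card := by
      refine Finset.card_bij (fun x _ => (e x).1) (fun x _ => Finset.mem_univ _)
        (fun x hx y hy hxy => e.injective (Prod.ext hxy
          (((memZ2 x).1 hx).trans ((memZ2 y).1 hy).symm))) (fun c _ => ?_)
      exact ⟨e.symm (c, 0), (memZ2 _).2 (by simp), by simp⟩
    rw [key, Finset.card_univ, ZMod.card]
  have cardFu : Fu.card = Nat.totient (p * q) := by
    rw [Nat.totient_mul hcop, Nat.totient_prime hp, Nat.totient_prime hq]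
    have step1 : Fu.card = (Finset.univ.filter
        (fun y : ZMod p × ZMod q => y.1 ≠ 0 ∧ y.2 ≠ 0)).card := by
      refine Finset.card_bij (fun x _ => e x) (fun x hx => ?_)
        (fun x _ y _ hxy => e.injective hxy) (fun y hy => ?_)
      · simp only [hFu, Finset.mem_filter] at hx
        simp [hx.2]
      · simp only [Finset.mem_filter] at hy
        exact ⟨e.symm y, by simp [hFu, hy.2], by simp⟩
    have step2 : (Finset.univ.filter (fun y : ZMod p × ZMod q => y.1 ≠ 0 ∧ y.2 ≠ 0))
        = (Finset.univ.filter (· ≠ (0 : ZMod p))) ×ˢ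
          (Finset.univ.filter (· ≠ (0 : ZMod q))) := by
      ext y
      simp [Finset.mem_product]
    have step3 : ∀ (m : ℕ) [NeZero m], (Finset.univ.filter (· ≠ (0 : ZMod m))).card
        = m - 1 := by
      intro m _
      rw [Finset.filter_ne', Finset.card_erase_of_mem (Finset.mem_univ _),
        Finset.card_univ, ZMod.card]
    rw [step1, step2, Finset.card_product, step3, step3]
  -- sums
  have hPint : Z1.powerset ∩ Z2.powerset
      = (({0} : Finset (ZMod (p*q)))).powerset := by
    ext S
    simp only [Finset.mem_inter, Finset.mem_powerset, Finset.subset_singleton_iff]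
    constructor
    · rintro ⟨h1, h2⟩
      by_cases hS : S = ∅
      · exact Or.inl hS
      · right
        obtain ⟨x, hx⟩ := Finset.nonempty_iff_ne_empty.2 hS
        have hx0 : ∀ y ∈ S, y = 0 := by
          intro y hy
          have h1' := (memZ1 y).1 (h1 hy)
          have h2' := (memZ2 y).1 (h2 hy)
          apply e.injective
          rw [map_zero]
          exact Prod.ext (by simpa using h1') (by simpa using h2')
        ext y
        simp only [Finset.mem_singleton]
        exact ⟨fun hy => hx0 y hy, fun hy => hy ▸ (hx0 x hx ▸ hx)⟩
    · rintro (rfl | rfl)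
      · simp
      · constructor
        · intro y hy
          rw [Finset.mem_singleton] at hy
          exact (memZ1 y).2 (by rw [hy]; simp)
        · intro y hy
          rw [Finset.mem_singleton] at hy
          exact (memZ2 y).2 (by rw [hy]; simp)
  have hsum12 : ∑ S ∈ Z1.powerset ∪ Z2.powerset, (X : ℝ[X]) ^ S.card
      = (1 + X) ^ q + (1 + X) ^ p - (1 + X) := by
    have := Finset.sum_union_inter (s₁ := Z1.powerset) (s₂ := Z2.powerset)
      (f := fun S => (X : ℝ[X]) ^ S.card)
    rw [hPint] at this
    have h0 : ∑ S ∈ (({0} : Finset (ZMod (p*q)))).powerset, (X : ℝ[X]) ^ S.card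
        = 1 + X := by
      rw [sum_powerset_X, Finset.card_singleton, pow_one]
    have this' := eq_sub_of_add_eq this
    rw [this', h0, sum_powerset_X, sum_powerset_X, cardZ1, cardZ2]
  have hsumF : ∑ S ∈ Fu.image (fun u => ({u} : Finset (ZMod (p*q)))), (X : ℝ[X]) ^ S.card
      = (Nat.totient (p*q) : ℝ[X]) * X := by
    rw [Finset.sum_image (g := fun u => ({u} : Finset (ZMod (p*q))))
      (f := fun S => (X : ℝ[X]) ^ S.card)
      (fun x _ y _ h => Finset.singleton_injective h)]
    simp only [Finset.card_singleton, pow_one, Finset.sum_const, nsmul_eq_mul, cardFu]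
  rw [hsum12, hsumF]
  have ht1 : 1 ≤ Nat.totient (p * q) := Nat.totient_pos.2 hn
  have : ((Nat.totient (p * q) - 1 : ℕ) : ℝ) = (Nat.totient (p*q) : ℝ) - 1 := by
    push_cast [ht1]; ring
  rw [this]
  simp only [map_sub, map_one, Polynomial.C_eq_natCast]
  ring
end

section
/- Let p be a prime and m ≥ 1 an integer, and set n = p^m. Then the independence polynomial of the comaximal graph Γ(ℤ_n) is I(Γ(ℤ_n), x) = φ(n)·x + (1 + x)^{p^{m−1}}. -/
open Polynomial

lemma aux_adj_iff (p m : ℕ) (hp : p.Prime) (hm : 1 ≤ m) (a b : ZMod (p^m)) :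
    (comaximalGraph (p^m)).Adj a b ↔ a ≠ b ∧ (IsUnit a ∨ IsUnit b) := by
  haveI : NeZero (p^m) := ⟨pow_ne_zero m hp.pos.ne'⟩
  have hunit : ∀ x : ZMod (p^m), ¬ IsUnit x → (p : ZMod (p^m)) ∣ x := by
    intro x hx
    have hx2 : ¬ (x.val).Coprime (p^m) := fun hc => hx (by
      rw [← ZMod.natCast_rightInverse x]
      exact (ZMod.isUnit_iff_coprime x.val (p^m)).2 hc)
    rw [Nat.coprime_pow_right_iff hm, Nat.coprime_comm, hp.coprime_iff_not_dvd, not_not] at hx2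
    calc (p : ZMod (p^m)) ∣ (x.val : ZMod (p^m)) := Nat.cast_dvd_cast hx2
    _ = x := ZMod.natCast_rightInverse x
  have hpnu : ¬ IsUnit (p : ZMod (p^m)) := by
    intro h
    rw [ZMod.isUnit_iff_coprime, Nat.coprime_pow_right_iff hm] at h
    rw [Nat.Coprime, Nat.gcd_self] at h
    exact hp.one_lt.ne' h
  constructor
  · rintro ⟨hne, h⟩
    refine ⟨hne, ?_⟩
    by_contra hcon
    push_neg at hcon
    have hle : Ideal.span ({a, b} : Set (ZMod (p^m))) ≤ Ideal.span {(p : ZMod (p^m))} := by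
      rw [Ideal.span_le]
      rintro x (rfl | rfl) <;>
        simpa [Ideal.mem_span_singleton] using hunit _ (by tauto)
    rw [h, top_le_iff] at hle
    exact hpnu (Ideal.span_singleton_eq_top.mp hle)
  · rintro ⟨hne, h | h⟩
    · exact ⟨hne, Ideal.eq_top_of_isUnit_mem _ (Ideal.subset_span (by simp)) h⟩
    · exact ⟨hne, Ideal.eq_top_of_isUnit_mem _ (Ideal.subset_span (by simp)) h⟩

lemma aux_count (p m : ℕ) (hp : p.Prime) (hm : 1 ≤ m) (k : ℕ) :
    Nat.card {S : Finset (ZMod (p^m)) //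
        (∀ a ∈ S, ∀ b ∈ S, ¬ (comaximalGraph (p^m)).Adj a b) ∧ S.card = k} =
      (p^(m-1)).choose k + (if k = 1 then (p^m).totient else 0) := by
  classical
  haveI : NeZero (p^m) := ⟨pow_ne_zero m hp.pos.ne'⟩
  have hcard : Fintype.card (ZMod (p^m)) = p^m := ZMod.card _
  set N : Finset (ZMod (p^m)) := Finset.univ.filter (fun a => ¬ IsUnit a) with hNdef
  have hN : N.card = p^(m-1) := by
    have h1 : (Finset.univ.filter (fun a : ZMod (p^m) => IsUnit a)).card = (p^m).totient := by
      rw [← ZMod.card_units_eq_totient (p^m), ← Fintype.card_subtype]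
      exact Fintype.card_congr
        ⟨fun x => x.2.unit, fun u => ⟨u, u.isUnit⟩,
         fun x => Subtype.ext x.2.unit_spec, fun u => Units.ext u.isUnit.unit_spec⟩
    have h2 := Finset.card_filter_add_card_filter_not
      (s := (Finset.univ : Finset (ZMod (p^m)))) (p := fun a => IsUnit a)
    rw [Finset.card_univ, hcard, h1] at h2
    have htot : (p^m).totient = p^(m-1) * (p-1) := Nat.totient_prime_pow hp hm
    have hq : p^(m-1) * p = p^m := by
      rw [← pow_succ]; congr 1; omega
    have hkey : p^(m-1)*(p-1) + p^(m-1) = p^m := by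
      rw [← Nat.mul_succ, Nat.succ_eq_add_one, Nat.sub_add_cancel hp.one_lt.le, hq]
    rw [hNdef]
    omega
  rw [Nat.card_eq_fintype_card, Fintype.card_subtype]
  by_cases hk : k = 1
  · subst hk
    have : (Finset.univ.filter (fun S : Finset (ZMod (p^m)) =>
        (∀ a ∈ S, ∀ b ∈ S, ¬ (comaximalGraph (p^m)).Adj a b) ∧ S.card = 1)) =
        Finset.powersetCard 1 Finset.univ := by
      ext S
      simp only [Finset.mem_filter, Finset.mem_univ, true_and, Finset.mem_powersetCard,
        Finset.subset_univ]
      constructor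
      · rintro ⟨-, h⟩; exact h
      · intro h
        refine ⟨?_, h⟩
        intro a ha b hb hadj
        have : a = b := by
          rw [Finset.card_eq_one] at h
          obtain ⟨c, rfl⟩ := h
          simp at ha hb; rw [ha, hb]
        exact hadj.ne this
    rw [this, Finset.card_powersetCard, Finset.card_univ, hcard]
    have hq : p^(m-1) * p = p^m := by rw [← pow_succ]; congr 1; omega
    have htot : (p^m).totient = p^(m-1) * (p-1) := Nat.totient_prime_pow hp hm
    have hkey : p^(m-1)*(p-1) + p^(m-1) = p^m := by
      rw [← Nat.mul_succ, Nat.succ_eq_add_one, Nat.sub_add_cancel hp.one_lt.le, hq]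
    simp only [Nat.choose_one_right, if_pos]
    omega
  · have : (Finset.univ.filter (fun S : Finset (ZMod (p^m)) =>
        (∀ a ∈ S, ∀ b ∈ S, ¬ (comaximalGraph (p^m)).Adj a b) ∧ S.card = k)) =
        Finset.powersetCard k N := by
      ext S
      simp only [Finset.mem_filter, Finset.mem_univ, true_and, Finset.mem_powersetCard]
      constructor
      · rintro ⟨hind, hSk⟩
        refine ⟨?_, hSk⟩
        intro a ha
        simp only [hNdef, Finset.mem_filter, Finset.mem_univ, true_and]
        intro hu
        -- S has card k ≠ 1; if k = 0, S empty, contradiction with a ∈ S.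
        have hk2 : 2 ≤ k := by
          rcases Nat.lt_or_ge k 2 with h | h
          · interval_cases k
            · simp [Finset.card_eq_zero] at hSk; subst hSk; simp at ha
            · exact absurd rfl hk
          · exact h
        obtain ⟨b, hb, hba⟩ := Finset.exists_mem_ne (by omega : 1 < S.card) a
        exact hind a ha b hb ((aux_adj_iff p m hp hm a b).2 ⟨(Ne.symm hba), Or.inl hu⟩)
      · rintro ⟨hSN, hSk⟩
        refine ⟨?_, hSk⟩
        intro a ha b hb hadj
        obtain ⟨-, hu⟩ := (aux_adj_iff p m hp hm a b).1 hadj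
        rcases hu with hu | hu
        · have := hSN ha; simp [hNdef] at this; exact this hu
        · have := hSN hb; simp [hNdef] at this; exact this hu
    rw [this, Finset.card_powersetCard, hN, if_neg hk, add_zero]


/-- For `n = p^m` with `p` prime and `m ≥ 1`,
`I(Γ(ℤ_n), x) = φ(n)·x + (1 + x)^(p^(m−1))`. -/
theorem stmt_16 (p m : ℕ) (hp : p.Prime) (hm : 1 ≤ m) :
    indepPoly (comaximalGraph (p ^ m)) =
      Polynomial.C ((Nat.totient (p ^ m) : ℝ)) * Polynomial.X +
        (1 + Polynomial.X) ^ (p ^ (m - 1)) := by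
  classical
  haveI : NeZero (p^m) := ⟨pow_ne_zero m hp.pos.ne'⟩
  have hqn : p^(m-1) ≤ p^m := Nat.pow_le_pow_right hp.pos (Nat.sub_le m 1)
  have hbin : ((1 + X : ℝ[X])) ^ (p^(m-1)) =
      ∑ k ∈ Finset.range (p^m + 1), C (((p^(m-1)).choose k : ℝ)) * X ^ k := by
    rw [add_comm, add_pow]
    rw [Finset.sum_subset (Finset.range_subset_range.2 (by omega : p^(m-1)+1 ≤ p^m+1))]
    · exact (Finset.sum_congr rfl fun k _ => by
        rw [one_pow, mul_one, C_eq_natCast, mul_comm]).symm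
    · intro k hk hk'
      have h2 : p^(m-1) < k := by
        simp only [Finset.mem_range] at hk hk'; omega
      simp [Nat.choose_eq_zero_of_lt h2, C_eq_natCast]
  rw [indepPoly, Nat.card_zmod]
  have hco : ∀ k, ((Nat.card {S : Finset (ZMod (p^m)) //
      (∀ a ∈ S, ∀ b ∈ S, ¬ (comaximalGraph (p^m)).Adj a b) ∧ S.card = k}) : ℝ) =
      ((p^(m-1)).choose k : ℝ) + (if k = 1 then ((p^m).totient : ℝ) else 0) := by
    intro k
    rw [aux_count p m hp hm k]
    push_cast
    split <;> simp
  simp only [hco, map_add, add_mul, apply_ite C, map_zero, ite_mul, zero_mul]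
  rw [Finset.sum_add_distrib, Finset.sum_ite_eq' (Finset.range (p^m+1)) 1
    (fun k => C ((p^m).totient : ℝ) * X ^ k)]
  have h1mem : (1 : ℕ) ∈ Finset.range (p^m + 1) := by
    simp only [Finset.mem_range]
    have := Nat.one_le_pow m p hp.pos
    omega
  rw [if_pos h1mem, pow_one, hbin, add_comm]
end

section
/- Let p < q be primes, let n₁, n₂ ≥ 1 be integers, and set n = p^{n₁} q^{n₂}. Then the independence polynomial of the comaximal graph Γ(ℤ_n) is I(Γ(ℤ_n), x) = φ(n)·x + (1 + x)^{p^{n₁−1} q^{n₂}} + (1 + x)^{p^{n₁} q^{n₂−1}} − (1 + x)^{p^{n₁−1} q^{n₂−1}}. -/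
open Polynomial

section Aux

open Finset

private lemma indepPoly_sum_eq {V : Type*} [Fintype V] (G : SimpleGraph V)
    (F : Finset (Finset V))
    (hF : ∀ S : Finset V, S ∈ F ↔ (∀ a ∈ S, ∀ b ∈ S, ¬ G.Adj a b)) :
    (∑ k ∈ Finset.range (Nat.card V + 1),
      Polynomial.C ((Nat.card {S : Finset V //
        (∀ a ∈ S, ∀ b ∈ S, ¬ G.Adj a b) ∧ S.card = k}) : ℝ) * Polynomial.X ^ k)
      = ∑ S ∈ F, (Polynomial.X : ℝ[X]) ^ S.card := by
  classical
  rw [← Finset.sum_fiberwise_of_maps_to' (g := Finset.card) (t := Finset.range (Nat.card V + 1))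
    (fun S hS => by
      simp only [Finset.mem_range, Nat.lt_succ_iff, Nat.card_eq_fintype_card]
      exact (Finset.card_le_univ S))]
  refine Finset.sum_congr rfl fun k _ => ?_
  rw [Finset.sum_const, nsmul_eq_mul]
  congr 1
  rw [Nat.card_eq_fintype_card, Fintype.card_subtype]
  rw [map_natCast (Polynomial.C : ℝ →+* ℝ[X])]
  norm_cast
  congr 1
  ext S
  simp [hF S, and_comm]

private lemma span_pair_top_iff {n : ℕ} [NeZero n] (a b : ZMod n) :
    Ideal.span ({a, b} : Set (ZMod n)) = ⊤ ↔ Nat.Coprime (Nat.gcd a.val b.val) n := by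
  rw [Ideal.eq_top_iff_one, Ideal.mem_span_pair]
  constructor
  · rintro ⟨x, y, h⟩
    rw [← ZMod.isUnit_iff_coprime]
    have ha : ((Nat.gcd a.val b.val : ℕ) : ZMod n) ∣ a := by
      have h1 : ((Nat.gcd a.val b.val : ℕ) : ZMod n) ∣ ((a.val : ℕ) : ZMod n) :=
        Nat.cast_dvd_cast (Nat.gcd_dvd_left a.val b.val)
      simpa [ZMod.natCast_zmod_val] using h1
    have hb : ((Nat.gcd a.val b.val : ℕ) : ZMod n) ∣ b := by
      have h1 : ((Nat.gcd a.val b.val : ℕ) : ZMod n) ∣ ((b.val : ℕ) : ZMod n) :=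
        Nat.cast_dvd_cast (Nat.gcd_dvd_right a.val b.val)
      simpa [ZMod.natCast_zmod_val] using h1
    exact isUnit_of_dvd_one (h ▸ Dvd.dvd.add (Dvd.dvd.mul_left ha x) (Dvd.dvd.mul_left hb y))
  · intro h
    have hu : IsUnit ((Nat.gcd a.val b.val : ℕ) : ZMod n) := (ZMod.isUnit_iff_coprime _ n).mpr h
    obtain ⟨u, hu⟩ := hu
    have hg : ((Nat.gcd a.val b.val : ℕ) : ZMod n) =
        ((Nat.gcdA a.val b.val : ℤ) : ZMod n) * a + ((Nat.gcdB a.val b.val : ℤ) : ZMod n) * b := by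
      have hgab := Nat.gcd_eq_gcd_ab a.val b.val
      calc ((Nat.gcd a.val b.val : ℕ) : ZMod n)
          = (((Nat.gcd a.val b.val : ℤ)) : ZMod n) := by push_cast; ring
        _ = (((a.val : ℤ) * Nat.gcdA a.val b.val + (b.val : ℤ) * Nat.gcdB a.val b.val : ℤ) : ZMod n) := by
            rw [← hgab]
        _ = _ := by push_cast [ZMod.natCast_zmod_val]; ring
    refine ⟨(↑u⁻¹ : ZMod n) * ((Nat.gcdA a.val b.val : ℤ) : ZMod n),
      (↑u⁻¹ : ZMod n) * ((Nat.gcdB a.val b.val : ℤ) : ZMod n), ?_⟩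
    have h1 : (↑u⁻¹ : ZMod n) * ((Nat.gcd a.val b.val : ℕ) : ZMod n) = 1 := by
      rw [← hu, ← Units.val_mul, inv_mul_cancel, Units.val_one]
    calc (↑u⁻¹ : ZMod n) * ((Nat.gcdA a.val b.val : ℤ) : ZMod n) * a +
          (↑u⁻¹ : ZMod n) * ((Nat.gcdB a.val b.val : ℤ) : ZMod n) * b
        = (↑u⁻¹ : ZMod n) * (((Nat.gcdA a.val b.val : ℤ) : ZMod n) * a +
            ((Nat.gcdB a.val b.val : ℤ) : ZMod n) * b) := by ring
      _ = 1 := by rw [← hg, h1]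

private lemma card_dvd_val {n d : ℕ} [NeZero n] (hd : d ∣ n) (hd0 : 0 < d) :
    (Finset.univ.filter fun a : ZMod n => d ∣ a.val).card = n / d := by
  classical
  rw [← Finset.card_range (n / d)]
  apply Finset.card_bij' (fun a _ => a.val / d) (fun k _ => ((d * k : ℕ) : ZMod n))
  · intro a ha
    simp only [Finset.mem_filter, Finset.mem_univ, true_and] at ha
    exact Finset.mem_range.mpr (Nat.div_lt_div_of_lt_of_dvd hd (ZMod.val_lt a))
  · intro k hk
    simp only [Finset.mem_range] at hk
    have hlt : d * k < n := by
      calc d * k < d * (n / d) := (Nat.mul_lt_mul_left hd0).mpr hk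
        _ = n := Nat.mul_div_cancel' hd
    simp only [Finset.mem_filter, Finset.mem_univ, true_and]
    rw [ZMod.val_natCast_of_lt hlt]
    exact Dvd.intro k rfl
  · intro a ha
    simp only [Finset.mem_filter, Finset.mem_univ, true_and] at ha
    rw [Nat.mul_div_cancel' ha]
    simp [ZMod.natCast_zmod_val]
  · intro k hk
    simp only [Finset.mem_range] at hk
    have hlt : d * k < n := by
      calc d * k < d * (n / d) := (Nat.mul_lt_mul_left hd0).mpr hk
        _ = n := Nat.mul_div_cancel' hd
    rw [ZMod.val_natCast_of_lt hlt, Nat.mul_div_cancel_left k hd0]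

private lemma sum_powerset_pow {V : Type*} [DecidableEq V] (s : Finset V) :
    (∑ t ∈ s.powerset, (Polynomial.X : ℝ[X]) ^ t.card) = (1 + Polynomial.X) ^ s.card := by
  have h := Finset.prod_add (fun _ : V => (Polynomial.X : ℝ[X])) (fun _ => 1) s
  simp only [Finset.prod_const, one_pow, mul_one] at h
  rw [add_comm (1 : ℝ[X]) Polynomial.X, ← h]

end Aux

set_option maxHeartbeats 2000000 in
/-- For `n = p^{n₁} q^{n₂}` with primes `p < q` and `n₁, n₂ ≥ 1`,
`I(Γ(ℤ_n), x) = φ(n)·x + (1+x)^(p^{n₁−1} q^{n₂}) + (1+x)^(p^{n₁} q^{n₂−1}) − (1+x)^(p^{n₁−1} q^{n₂−1})`. -/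
theorem stmt_17 (p q n₁ n₂ : ℕ) (hp : p.Prime) (hq : q.Prime) (hpq : p < q)
    (h1 : 1 ≤ n₁) (h2 : 1 ≤ n₂) :
    indepPoly (comaximalGraph (p ^ n₁ * q ^ n₂)) =
      Polynomial.C ((Nat.totient (p ^ n₁ * q ^ n₂) : ℝ)) * Polynomial.X +
        (1 + Polynomial.X) ^ (p ^ (n₁ - 1) * q ^ n₂) +
        (1 + Polynomial.X) ^ (p ^ n₁ * q ^ (n₂ - 1)) -
        (1 + Polynomial.X) ^ (p ^ (n₁ - 1) * q ^ (n₂ - 1)) := by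
  classical
  have hp0 : 0 < p := hp.pos
  have hq0 : 0 < q := hq.pos
  set N := p ^ n₁ * q ^ n₂ with hN
  have hN0 : 0 < N := by positivity
  haveI : NeZero N := ⟨hN0.ne'⟩
  have hpdvd : p ∣ N := dvd_mul_of_dvd_left (dvd_pow_self p (Nat.one_le_iff_ne_zero.mp h1)) _
  have hqdvd : q ∣ N := dvd_mul_of_dvd_right (dvd_pow_self q (Nat.one_le_iff_ne_zero.mp h2)) _
  -- coprimality characterization
  have hcop : ∀ g : ℕ, ¬ Nat.Coprime g N ↔ (p ∣ g ∨ q ∣ g) := by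
    intro g
    rw [hN, Nat.coprime_mul_iff_right, Nat.coprime_pow_right_iff h1,
      Nat.coprime_pow_right_iff h2]
    have e1 : g.Coprime p ↔ ¬ p ∣ g := by rw [Nat.coprime_comm]; exact hp.coprime_iff_not_dvd
    have e2 : g.Coprime q ↔ ¬ q ∣ g := by rw [Nat.coprime_comm]; exact hq.coprime_iff_not_dvd
    rw [e1, e2]
    tauto
  have hunit : ∀ a : ZMod N, IsUnit a ↔ Nat.Coprime a.val N := by
    intro a
    have := ZMod.isUnit_iff_coprime a.val N
    rwa [ZMod.natCast_zmod_val] at this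
  have hadj : ∀ a b : ZMod N, (comaximalGraph N).Adj a b ↔
      a ≠ b ∧ Nat.Coprime (Nat.gcd a.val b.val) N := by
    intro a b
    constructor
    · rintro ⟨h1', h2'⟩; exact ⟨h1', (span_pair_top_iff a b).mp h2'⟩
    · rintro ⟨h1', h2'⟩; exact ⟨h1', (span_pair_top_iff a b).mpr h2'⟩
  -- the sets
  set A : Finset (ZMod N) := Finset.univ.filter (fun a => p ∣ a.val) with hAdef
  set B : Finset (ZMod N) := Finset.univ.filter (fun a => q ∣ a.val) with hBdef
  set U : Finset (Finset (ZMod N)) :=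
    (Finset.univ.filter (fun a : ZMod N => IsUnit a)).image (fun u => ({u} : Finset (ZMod N)))
    with hUdef
  have hunit_notAB : ∀ u : ZMod N, IsUnit u → u ∉ A ∧ u ∉ B := by
    intro u hu
    rw [hunit] at hu
    constructor
    · intro hmem
      rw [hAdef, Finset.mem_filter] at hmem
      have : p ∣ Nat.gcd u.val N := Nat.dvd_gcd hmem.2 hpdvd
      rw [hu] at this
      exact hp.one_lt.ne' (Nat.dvd_one.mp this)
    · intro hmem
      rw [hBdef, Finset.mem_filter] at hmem
      have : q ∣ Nat.gcd u.val N := Nat.dvd_gcd hmem.2 hqdvd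
      rw [hu] at this
      exact hq.one_lt.ne' (Nat.dvd_one.mp this)
  -- characterization of independent sets
  have hF : ∀ S : Finset (ZMod N), S ∈ A.powerset ∪ B.powerset ∪ U ↔
      (∀ a ∈ S, ∀ b ∈ S, ¬ (comaximalGraph N).Adj a b) := by
    intro S
    constructor
    · intro hS a ha b hb hadj'
      obtain ⟨hne, hco⟩ := (hadj a b).mp hadj'
      rcases Finset.mem_union.mp hS with hS' | hSU
      · rcases Finset.mem_union.mp hS' with hSA | hSB
        · rw [Finset.mem_powerset] at hSA
          have hpa := (Finset.mem_filter.mp (hSA ha)).2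
          have hpb := (Finset.mem_filter.mp (hSA hb)).2
          exact (hcop _).mpr (Or.inl (Nat.dvd_gcd hpa hpb)) hco
        · rw [Finset.mem_powerset] at hSB
          have hqa := (Finset.mem_filter.mp (hSB ha)).2
          have hqb := (Finset.mem_filter.mp (hSB hb)).2
          exact (hcop _).mpr (Or.inr (Nat.dvd_gcd hqa hqb)) hco
      · obtain ⟨u, -, rfl⟩ := Finset.mem_image.mp hSU
        rw [Finset.mem_singleton] at ha hb
        exact hne (ha.trans hb.symm)
    · intro hind
      by_cases hu : ∃ u ∈ S, IsUnit u
      · obtain ⟨u, huS, hu⟩ := hu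
        have hSeq : S = {u} := by
          refine Finset.eq_singleton_iff_unique_mem.mpr ⟨huS, ?_⟩
          intro v hv
          by_contra hne
          apply hind u huS v hv
          have hle : Ideal.span ({u} : Set (ZMod N)) ≤ Ideal.span {u, v} :=
            Ideal.span_mono (by simp)
          have htop : Ideal.span ({u} : Set (ZMod N)) = ⊤ :=
            Ideal.span_singleton_eq_top.mpr hu
          exact ⟨fun h => hne h.symm, top_le_iff.mp (htop ▸ hle)⟩
        refine Finset.mem_union_right _ (Finset.mem_image.mpr ⟨u, ?_, hSeq.symm⟩)
        simp [hu]
      · push_neg at hu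
        have hdvd : ∀ a ∈ S, p ∣ a.val ∨ q ∣ a.val := fun a ha =>
          (hcop a.val).mp (fun hc => hu a ha ((hunit a).mpr hc))
        by_cases hA' : ∀ a ∈ S, p ∣ a.val
        · refine Finset.mem_union_left _ (Finset.mem_union_left _ (Finset.mem_powerset.mpr ?_))
          intro a ha
          exact Finset.mem_filter.mpr ⟨Finset.mem_univ _, hA' a ha⟩
        · push_neg at hA'
          obtain ⟨x, hx, hpx⟩ := hA'
          have hqx : q ∣ x.val := (hdvd x hx).resolve_left hpx
          refine Finset.mem_union_left _ (Finset.mem_union_right _ (Finset.mem_powerset.mpr ?_))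
          intro y hy
          refine Finset.mem_filter.mpr ⟨Finset.mem_univ _, ?_⟩
          by_cases hxy : y = x
          · subst hxy; exact hqx
          · have hnadj := hind x hx y hy
            rw [hadj] at hnadj
            push_neg at hnadj
            have hnco := hnadj (fun h => hxy h.symm)
            rcases (hcop _).mp hnco with hpg | hqg
            · exact absurd (hpg.trans (Nat.gcd_dvd_left _ _)) hpx
            · exact hqg.trans (Nat.gcd_dvd_right _ _)
  -- rewrite indepPoly as a sum over the union
  rw [indepPoly, indepPoly_sum_eq (comaximalGraph N) _ hF]
  -- disjointness of U
  have hUdisj : Disjoint (A.powerset ∪ B.powerset) U := by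
    rw [Finset.disjoint_right]
    intro S hSU hS
    obtain ⟨u, humem, rfl⟩ := Finset.mem_image.mp hSU
    have hu : IsUnit u := (Finset.mem_filter.mp humem).2
    rcases Finset.mem_union.mp hS with hSA | hSB
    · exact (hunit_notAB u hu).1 (Finset.mem_powerset.mp hSA (Finset.mem_singleton_self u))
    · exact (hunit_notAB u hu).2 (Finset.mem_powerset.mp hSB (Finset.mem_singleton_self u))
  rw [Finset.sum_union hUdisj]
  -- inclusion-exclusion on powersets
  have hinter : A.powerset ∩ B.powerset = (A ∩ B).powerset := by
    ext S
    simp only [Finset.mem_inter, Finset.mem_powerset, Finset.subset_inter_iff]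
  have hie : (∑ S ∈ A.powerset ∪ B.powerset, (Polynomial.X : ℝ[X]) ^ S.card)
      + ∑ S ∈ A.powerset ∩ B.powerset, (Polynomial.X : ℝ[X]) ^ S.card
      = (∑ S ∈ A.powerset, (Polynomial.X : ℝ[X]) ^ S.card)
        + ∑ S ∈ B.powerset, (Polynomial.X : ℝ[X]) ^ S.card := Finset.sum_union_inter
  rw [hinter] at hie
  have hsum_union : (∑ S ∈ A.powerset ∪ B.powerset, (Polynomial.X : ℝ[X]) ^ S.card)
      = (1 + Polynomial.X) ^ A.card + (1 + Polynomial.X) ^ B.card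
        - (1 + Polynomial.X) ^ (A ∩ B).card := by
    rw [eq_sub_iff_add_eq, ← sum_powerset_pow A, ← sum_powerset_pow B, ← sum_powerset_pow (A ∩ B)]
    exact hie
  -- sum over U
  have hcard_units : (Finset.univ.filter (fun a : ZMod N => IsUnit a)).card = N.totient := by
    rw [← ZMod.card_units_eq_totient N, Fintype.card_congr ZMod.unitsEquivCoprime,
      Fintype.card_subtype]
    congr 1
    ext a
    simp [hunit a]
  have hsumU : (∑ S ∈ U, (Polynomial.X : ℝ[X]) ^ S.card)
      = Polynomial.C ((N.totient : ℝ)) * Polynomial.X := by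
    rw [hUdef, Finset.sum_image (fun u _ v _ h => Finset.singleton_injective h)]
    simp only [Finset.card_singleton, pow_one, Finset.sum_const, hcard_units, nsmul_eq_mul]
    rw [map_natCast (Polynomial.C : ℝ →+* ℝ[X])]
  -- cardinalities
  have eA : N = p * (p ^ (n₁ - 1) * q ^ n₂) := by
    rw [hN]
    conv_lhs => rw [← Nat.sub_add_cancel h1]
    rw [pow_succ]
    ring
  have eB : N = q * (p ^ n₁ * q ^ (n₂ - 1)) := by
    rw [hN]
    conv_lhs => rw [← Nat.sub_add_cancel h2]
    rw [pow_succ]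
    ring
  have eAB : N = (p * q) * (p ^ (n₁ - 1) * q ^ (n₂ - 1)) := by
    rw [hN]
    conv_lhs => rw [← Nat.sub_add_cancel h1, ← Nat.sub_add_cancel h2]
    rw [pow_succ, pow_succ]
    ring
  have hcardA : A.card = p ^ (n₁ - 1) * q ^ n₂ := by
    rw [hAdef, card_dvd_val hpdvd hp0]
    conv_lhs => rw [eA]
    exact Nat.mul_div_cancel_left _ hp0
  have hcardB : B.card = p ^ n₁ * q ^ (n₂ - 1) := by
    rw [hBdef, card_dvd_val hqdvd hq0]
    conv_lhs => rw [eB]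
    exact Nat.mul_div_cancel_left _ hq0
  have hABeq : A ∩ B = Finset.univ.filter (fun a : ZMod N => p * q ∣ a.val) := by
    ext a
    simp only [hAdef, hBdef, Finset.mem_inter, Finset.mem_filter, Finset.mem_univ, true_and]
    constructor
    · rintro ⟨hpa, hqa⟩
      exact Nat.Coprime.mul_dvd_of_dvd_of_dvd ((Nat.coprime_primes hp hq).mpr hpq.ne) hpa hqa
    · intro h
      exact ⟨(dvd_mul_right p q).trans h, (dvd_mul_left q p).trans h⟩
  have hpqdvd : p * q ∣ N := by rw [eAB]; exact dvd_mul_right _ _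
  have hcardAB : (A ∩ B).card = p ^ (n₁ - 1) * q ^ (n₂ - 1) := by
    rw [hABeq, card_dvd_val hpqdvd (by positivity)]
    conv_lhs => rw [eAB]
    exact Nat.mul_div_cancel_left _ (by positivity)
  rw [hsum_union, hsumU, hcardA, hcardB, hcardAB]
  ring
end
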